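/- arXiv:1801.01026 — 2 statements merged into one kernel-verified Lean document; each statement's English description precedes it below -/
import Mathlib

section
/- Let n ≥ 2 and let α_1,…,α_n > 0 be real numbers. Let u : D_α → [0,1) be such that log u is plurisubharmonic on D_α, and suppose u(a) = 0 for some a ∈ D_α with a_n = 0. Then u(z_1,…,z_{n-1},0) = 0 for all (z_1,…,z_{n-1}) ∈ ℂ^{n-1}. -/
open Complex Set Metric
open scoped Classical

noncomputable section

/-- Extended-real logarithm, with value `⊥ = -∞` at `0` (and at negative inputs). -/
noncomputable def erealLog (x : ℝ) : EReal := if x ≤ 0 then (⊥ : EReal) else ((Real.log x : ℝ) : EReal)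

/-- Subharmonicity of an `EReal`-valued function on a subset of `ℂ`, formulated via the
classical comparison property with harmonic functions (it suffices to compare with real
parts of complex polynomials): `w` is upper semicontinuous and for every closed disc
contained in `U` and every polynomial `p`, if `w ≤ Re p` on the boundary circle then
`w ≤ Re p` on the whole disc. -/
def SubharmonicOnE (w : ℂ → EReal) (U : Set ℂ) : Prop :=
  UpperSemicontinuousOn w U ∧
  ∀ (c : ℂ) (r : ℝ), 0 < r → closedBall c r ⊆ U →
    ∀ p : Polynomial ℂ,
      (∀ ζ ∈ sphere c r, w ζ ≤ (((p.eval ζ).re : ℝ) : EReal)) →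
      ∀ ζ ∈ closedBall c r, w ζ ≤ (((p.eval ζ).re : ℝ) : EReal)

/-- Plurisubharmonicity of an `EReal`-valued function on a subset of `ℂⁿ`:
upper semicontinuity together with subharmonicity of the restriction to every complex line. -/
def PlurisubharmonicOnE {m : ℕ} (w : (Fin m → ℂ) → EReal) (G : Set (Fin m → ℂ)) : Prop :=
  UpperSemicontinuousOn w G ∧
  ∀ a b : Fin m → ℂ,
    SubharmonicOnE (fun lam => w (a + lam • b)) {lam : ℂ | a + lam • b ∈ G}

/-- The Sibony class `S_G(a)`: functions `u : G → [0,1)` with `log u` plurisubharmonic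
on `G`, `u a = 0`, and `u` of class `C²` in some neighborhood of `a`. -/
def SibonyClass {m : ℕ} (G : Set (Fin m → ℂ)) (a : Fin m → ℂ) (u : (Fin m → ℂ) → ℝ) : Prop :=
  (∀ z ∈ G, u z ∈ Ico (0 : ℝ) 1) ∧
  PlurisubharmonicOnE (fun z => erealLog (u z)) G ∧
  u a = 0 ∧
  ∃ V : Set (Fin m → ℂ), IsOpen V ∧ a ∈ V ∧ V ⊆ G ∧ ContDiffOn ℝ 2 u V

/-- The Sibony function `s_G(a,z) = sup {√(u z) : u ∈ S_G(a)}`. -/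
noncomputable def sibonyFn {m : ℕ} (G : Set (Fin m → ℂ)) (a z : Fin m → ℂ) : ℝ :=
  sSup {t : ℝ | ∃ u, SibonyClass G a u ∧ t = Real.sqrt (u z)}

/-- The Möbius pseudodistance `m_G(a,z) = sup {|f z| : f : G → 𝔻 holomorphic, f a = 0}`. -/
noncomputable def mobiusFn {m : ℕ} (G : Set (Fin m → ℂ)) (a z : Fin m → ℂ) : ℝ :=
  sSup {t : ℝ | ∃ f : (Fin m → ℂ) → ℂ, DifferentiableOn ℂ f G ∧
    (∀ w ∈ G, ‖f w‖ < 1) ∧ f a = 0 ∧ t = ‖f z‖}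

/-- The pluricomplex Green function
`g_G(a,z) = sup {u z : u : G → [0,1), log u psh on G, sup_{w ≠ a} u w / ‖w - a‖ < ∞}`. -/
noncomputable def greenFn {m : ℕ} (G : Set (Fin m → ℂ)) (a z : Fin m → ℂ) : ℝ :=
  sSup {t : ℝ | ∃ u : (Fin m → ℂ) → ℝ,
    (∀ w ∈ G, u w ∈ Ico (0 : ℝ) 1) ∧
    PlurisubharmonicOnE (fun w => erealLog (u w)) G ∧
    (∃ C : ℝ, ∀ w ∈ G, w ≠ a → u w ≤ C * ‖w - a‖) ∧
    t = u z}

/-- `|z^α| = |z_1|^{α_1} ⋯ |z_n|^{α_n}` (real powers). -/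
noncomputable def absPow {m : ℕ} (α : Fin m → ℝ) (z : Fin m → ℂ) : ℝ :=
  ∏ j, ‖z j‖ ^ (α j)

/-- The elementary Reinhardt domain
`D_α = {z ∈ ℂⁿ(α) : |z^α| < 1}`, where `ℂⁿ(α) = {z : z_j ≠ 0 whenever α_j < 0}`. -/
def reinhardt {m : ℕ} (α : Fin m → ℝ) : Set (Fin m → ℂ) :=
  {z | (∀ j, α j < 0 → z j ≠ 0) ∧ absPow α z < 1}

/-- `σ(a) = #{j : α_j > 0 and a_j = 0}`. -/
noncomputable def sigmaCnt {m : ℕ} (α : Fin m → ℝ) (a : Fin m → ℂ) : ℕ :=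
  Set.ncard {j : Fin m | 0 < α j ∧ a j = 0}

/-- `μ(a) = min {α_j : α_j > 0, a_j = 0}`. -/
noncomputable def muMin {m : ℕ} (α : Fin m → ℝ) (a : Fin m → ℂ) : ℝ :=
  sInf {t : ℝ | ∃ j, 0 < α j ∧ a j = 0 ∧ t = α j}

/-- `r(a) = 1` if `σ(a) = 0`, and `r(a) = Σ_{j : α_j > 0, a_j = 0} α_j` otherwise. -/
noncomputable def rExp {m : ℕ} (α : Fin m → ℝ) (a : Fin m → ℂ) : ℝ :=
  if sigmaCnt α a = 0 then 1 else ∑ j, if 0 < α j ∧ a j = 0 then α j else 0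

/-- The Möbius distance on the unit disc: `m_𝔻(a,z) = |(z - a)/(1 - conj a * z)|`. -/
noncomputable def mobiusDisc (a z : ℂ) : ℝ :=
  ‖(z - a) / (1 - (starRingEnd ℂ) a * z)‖

/-- `z^α = z_1^{α_1} ⋯ z_n^{α_n}` for integer exponents. -/
noncomputable def zpowProd {m : ℕ} (α : Fin m → ℤ) (z : Fin m → ℂ) : ℂ :=
  ∏ j, z j ^ (α j)

end


section AuxLiouville

open Filter Polynomial
open scoped Topology

-- EReal helpers
lemma my_ereal_le_coe_of_forall (x : EReal) (c : ℝ)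
    (h : ∀ t : ℝ, 0 < t → x ≤ ((c + t : ℝ) : EReal)) : x ≤ (c : EReal) := by
  by_contra hc
  push_neg at hc
  obtain ⟨y, h1, h2⟩ := exists_between hc
  lift y to ℝ using ⟨ne_top_of_lt h2, ne_bot_of_gt h1⟩
  have hcr : c < y := by exact_mod_cast h1
  have := h ((y - c) / 2) (by linarith)
  have h3 : ((c + (y - c) / 2 : ℝ) : EReal) < (y : EReal) := by
    exact_mod_cast (by linarith : c + (y - c) / 2 < y)
  exact absurd (this.trans_lt (h3.trans h2)) (lt_irrefl x)

lemma my_ereal_coe_le_of_forall (x : EReal) (c : ℝ)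
    (h : ∀ n : ℕ, ((c - 1 / (n + 1) : ℝ) : EReal) ≤ x) : (c : EReal) ≤ x := by
  by_contra hc
  push_neg at hc
  obtain ⟨y, h1, h2⟩ := exists_between hc
  lift y to ℝ using ⟨ne_top_of_lt h2, ne_bot_of_gt h1⟩
  have hcr : y < c := by exact_mod_cast h2
  obtain ⟨n, hn⟩ := exists_nat_one_div_lt (show (0:ℝ) < c - y by linarith)
  have := h n
  have h3 : (y : EReal) < ((c - 1 / (n + 1) : ℝ) : EReal) := by
    exact_mod_cast (by linarith : y < c - 1 / (n + 1))
  exact absurd ((h3.trans_le this).trans h1) (lt_irrefl _)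

lemma my_ereal_bot_of_forall (x : EReal) (h : ∀ t : ℝ, x ≤ (t : EReal)) : x = ⊥ := by
  induction x using EReal.rec with
  | bot => rfl
  | coe c => exact absurd (by exact_mod_cast h (c - 1)) (by norm_num)
  | top => exact absurd (h 0) (by simp)

-- open sublevel set
lemma my_open_lt (w : ℂ → EReal) (hw : UpperSemicontinuous w) (g : ℂ → ℝ)
    (hg : ContinuousOn g {(0:ℂ)}ᶜ) :
    IsOpen {z : ℂ | z ≠ 0 ∧ w z < ((g z : ℝ) : EReal)} := by
  rw [isOpen_iff_mem_nhds]
  rintro x ⟨hx0, hxlt⟩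
  obtain ⟨y, h1, h2⟩ := exists_between hxlt
  lift y to ℝ using ⟨ne_top_of_lt h2, ne_bot_of_gt h1⟩
  have hyg : y < g x := by exact_mod_cast h2
  have hU : {(0:ℂ)}ᶜ ∈ 𝓝 x := (isOpen_compl_singleton).mem_nhds hx0
  have hgc : ContinuousAt g x := hg.continuousAt hU
  have h3 : ∀ᶠ z in 𝓝 x, w z < (y : EReal) := hw x _ h1
  have h4 : ∀ᶠ z in 𝓝 x, y < g z := hgc.eventually_const_lt hyg
  filter_upwards [h3, h4, hU] with z hz1 hz2 hz3
  exact ⟨hz3, hz1.trans (by exact_mod_cast hz2)⟩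

lemma my_q_nonneg (x y : ℝ) (h : x^2 + y^2 = 1) (hx : x ≤ 1/2) :
    0 ≤ -1/8 - 3/8*x - 3/8*(x*x - y*y) - 1/8*((x*x - y*y)*x - (x*y + y*x)*y) := by
  have hE : -1/8 - 3/8*x - 3/8*(x*x - y*y) - 1/8*((x*x - y*y)*x - (x*y + y*x)*y)
      = -(1/2)*(x - 1/2)*(x + 1)^2 := by
    have hy : y^2 = 1 - x^2 := by linarith
    nlinarith [hy, sq_nonneg y]
  rw [hE]
  have hx1 : -1 ≤ x := by nlinarith [sq_nonneg y]
  nlinarith [sq_nonneg (x+1)]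

lemma my_q_ge_neg_one (x y : ℝ) (h : x^2 + y^2 = 1) :
    -1 ≤ -1/8 - 3/8*x - 3/8*(x*x - y*y) - 1/8*((x*x - y*y)*x - (x*y + y*x)*y) := by
  have hx1 : -1 ≤ x := by nlinarith [sq_nonneg y]
  have hx2 : x ≤ 1 := by nlinarith [sq_nonneg y]
  have hy : y^2 = 1 - x^2 := by linarith
  nlinarith [sq_nonneg (x+1), sq_nonneg (x-1), sq_nonneg (x*(x+1))]

lemma my_log_poly_approx (c : ℂ) (hc : c ≠ 0) (ρ : ℝ) (hρ : 0 < ρ)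
    (hρc : ρ < ‖c‖ / 2) (ε : ℝ) (hε : 0 < ε) :
    ∃ P : Polynomial ℂ, ∀ ζ ∈ closedBall c ρ,
      ‖P.eval ζ - Complex.log (ζ / c)‖ ≤ ε := by
  have habs : 0 < ‖c‖ := norm_pos_iff.mpr hc
  set R2 : ℝ := (ρ + ‖c‖ / 2) / 2 with hR2def
  have hR2pos : 0 < R2 := by positivity
  have hρR2 : ρ < R2 := by simp only [hR2def]; linarith
  have hR2c : R2 < ‖c‖ / 2 := by simp only [hR2def]; linarith
  set F : ℂ → ℂ := fun z => Complex.log (z / c) with hF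
  have hd : DifferentiableOn ℂ F (closedBall c R2.toNNReal) := by
    intro z hz
    have hz' : ‖z - c‖ ≤ R2 := by
      have := mem_closedBall.mp hz
      rwa [Complex.dist_eq, Real.coe_toNNReal _ hR2pos.le] at this
    have hmem : z / c ∈ Complex.slitPlane := by
      have h1 : ‖(z - c) / c‖ < 1 / 2 := by
        rw [norm_div]
        rw [div_lt_iff₀ habs]
        calc ‖z - c‖ ≤ R2 := hz'
        _ < ‖c‖ / 2 := hR2c
        _ = 1 / 2 * ‖c‖ := by ring
      have h2 : z / c = 1 + (z - c) / c := by field_simp; ring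
      refine Complex.mem_slitPlane_iff.mpr (Or.inl ?_)
      rw [h2, Complex.add_re, Complex.one_re]
      have := Complex.abs_re_le_norm ((z - c) / c)
      have h3 : ((z - c) / c).re ≥ -(1/2) := by
        cases abs_le.mp (this.trans h1.le) with
        | intro h4 h5 => linarith
      linarith
    exact ((Complex.differentiableAt_log hmem).comp z
      (differentiableAt_id.div_const c)).differentiableWithinAt
  have hps := hd.hasFPowerSeriesOnBall (by simpa using hR2pos)
  set r' : NNReal := ((ρ + R2) / 2).toNNReal with hr'def
  have hr'R : (r' : ENNReal) < (R2.toNNReal : ENNReal) := by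
    rw [ENNReal.coe_lt_coe]
    rw [← NNReal.coe_lt_coe]
    rw [Real.coe_toNNReal _ (by positivity), Real.coe_toNNReal _ hR2pos.le]
    linarith
  have htu := hps.tendstoUniformlyOn hr'R
  rw [Metric.tendstoUniformlyOn_iff] at htu
  obtain ⟨N, hN⟩ := (htu ε hε).exists
  set p := cauchyPowerSeries F c R2.toNNReal with hp
  set pol0 : Polynomial ℂ := ∑ k ∈ Finset.range N, Polynomial.C (p.coeff k) * Polynomial.X ^ k
    with hpol0
  have heval : ∀ y : ℂ, pol0.eval y = p.partialSum N y := by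
    intro y
    rw [hpol0, FormalMultilinearSeries.partialSum]
    rw [Polynomial.eval_finset_sum]
    refine Finset.sum_congr rfl fun k _ => ?_
    rw [p.apply_eq_pow_smul_coeff, smul_eq_mul, Polynomial.eval_mul,
      Polynomial.eval_C, Polynomial.eval_pow, Polynomial.eval_X]
    ring
  refine ⟨pol0.comp (Polynomial.X - Polynomial.C c), fun ζ hζ => ?_⟩
  have hy : ζ - c ∈ ball (0 : ℂ) (r' : ℝ) := by
    rw [mem_ball, dist_zero_right]
    have : ‖ζ - c‖ ≤ ρ := by
      have := mem_closedBall.mp hζ; rwa [Complex.dist_eq] at this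
    have : (r' : ℝ) = (ρ + R2) / 2 := Real.coe_toNNReal _ (by positivity)
    rw [this]
    have := mem_closedBall.mp hζ; rw [Complex.dist_eq] at this
    linarith
  have := hN (ζ - c) hy
  rw [dist_eq_norm] at this
  have hFz : F (c + (ζ - c)) = F ζ := by ring_nf
  rw [hFz] at this
  rw [Polynomial.eval_comp, Polynomial.eval_sub, Polynomial.eval_X, Polynomial.eval_C, heval]
  have h6 : p.partialSum N (ζ - c) - Complex.log (ζ / c) = -(F ζ - p.partialSum N (ζ - c)) := by
    simp only [hF]; ring
  rw [h6, norm_neg]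
  exact this.le

lemma my_abs_lt_of_sq (a b : ℝ) (ha : 0 ≤ a) (h : a^2 < b^2) (hb : 0 ≤ b) : a < b := by
  nlinarith

lemma my_normsq_split (z0 ζ : ℂ) : Complex.normSq ζ = Complex.normSq z0 +
    Complex.normSq (ζ - z0) + 2 * ((starRingEnd ℂ) z0 * (ζ - z0)).re := by
  simp only [Complex.normSq_apply, Complex.mul_re, Complex.conj_re, Complex.conj_im,
    Complex.sub_re, Complex.sub_im]
  ring

set_option maxHeartbeats 2000000 in
lemma my_annulus (w : ℂ → EReal)
    (husc : UpperSemicontinuous w)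
    (hcomp : ∀ (c : ℂ) (r : ℝ), 0 < r → ∀ p : Polynomial ℂ,
        (∀ ζ ∈ sphere c r, w ζ ≤ (((p.eval ζ).re : ℝ) : EReal)) →
        ∀ ζ ∈ closedBall c r, w ζ ≤ (((p.eval ζ).re : ℝ) : EReal))
    (hw0 : ∀ z, w z ≤ (0 : EReal))
    (M d : ℝ) (hM : 0 < M) (hd0 : 0 < d) (hd : d ≤ 1/2)
    (hball : ∀ z ∈ closedBall (0:ℂ) d, w z ≤ ((-M : ℝ) : EReal)) :
    w 1 ≤ ((-(M/2) : ℝ) : EReal) := by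
  have hd1 : d < 1 := by linarith
  set L : ℝ := -Real.log d with hLdef
  have hL : 0 < L := by
    have := Real.log_neg hd0 hd1
    simp only [hLdef]; linarith
  set R : ℝ := d⁻¹ with hRdef
  have hRpos : 0 < R := by positivity
  have hlogR : Real.log R = L := by rw [hRdef, Real.log_inv]
  have hR2 : 1 < R := by
    rw [hRdef]
    exact (one_lt_inv_iff₀).mpr ⟨hd0, hd1⟩
  set B : ℝ := M / (2 * L) with hBdef
  have hB : 0 < B := by positivity
  set h : ℂ → ℝ := fun z => -(M/2) + B * Real.log (‖z‖) with hhdef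
  have hcont : ContinuousOn h {(0:ℂ)}ᶜ := by
    apply ContinuousOn.add continuousOn_const
    apply ContinuousOn.mul continuousOn_const
    apply ContinuousOn.comp Real.continuousOn_log continuous_norm.continuousOn
    intro z hz
    simp only [mem_compl_iff, mem_singleton_iff] at hz ⊢
    exact norm_ne_zero_iff.mpr hz
  have hhd : ∀ z : ℂ, ‖z‖ = d → h z = -M := by
    intro z hz
    simp only [hhdef, hz]
    have : Real.log d = -L := by simp [hLdef]
    rw [this, hBdef]
    field_simp
    ring
  have hhR : ∀ z : ℂ, ‖z‖ = R → h z = 0 := by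
    intro z hz
    simp only [hhdef, hz, hlogR, hBdef]
    field_simp
    ring
  have hh1 : h 1 = -(M/2) := by simp [hhdef]
  -- the annulus
  set An : Set ℂ := {z | d ≤ ‖z‖ ∧ ‖z‖ ≤ R} with hAndef
  have hAnclosed : IsClosed An := by
    have : An = {z : ℂ | d ≤ ‖z‖} ∩ {z : ℂ | ‖z‖ ≤ R} := by
      ext z; simp [hAndef]
    rw [this]
    exact (isClosed_le continuous_const continuous_norm).inter
      (isClosed_le continuous_norm continuous_const)
  have hAncomp : IsCompact An := by
    apply Metric.isCompact_of_isClosed_isBounded hAnclosed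
    apply (Metric.isBounded_closedBall (x := (0:ℂ)) (r := R)).subset
    intro z hz
    simp only [mem_closedBall, Complex.dist_eq, sub_zero]
    exact hz.2
  have hAnne0 : ∀ z ∈ An, z ≠ 0 := by
    intro z hz hz0
    rw [hz0] at hz
    simp only [hAndef, mem_setOf_eq, norm_zero] at hz
    linarith [hz.1]
  have h1An : (1:ℂ) ∈ An := by
    simp only [hAndef, mem_setOf_eq, norm_one]
    exact ⟨by linarith, hR2.le⟩
  -- the set of admissible constants
  set S : Set ℝ := {t | ∀ z ∈ An, w z ≤ ((h z + t : ℝ) : EReal)} with hSdef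
  have hup : ∀ t ∈ S, ∀ t' : ℝ, t ≤ t' → t' ∈ S := by
    intro t ht t' htt' z hz
    refine (ht z hz).trans ?_
    exact_mod_cast (by linarith : h z + t ≤ h z + t')
  have hMS : M ∈ S := by
    intro z hz
    have h1 : Real.log d ≤ Real.log (‖z‖) := Real.log_le_log hd0 hz.1
    have h2 : -L ≤ Real.log (‖z‖) := by
      simp only [hLdef] at h1 ⊢; linarith
    have h3 : (0:ℝ) ≤ h z + M := by
      have : B * (-L) ≤ B * Real.log (‖z‖) := by
        apply mul_le_mul_of_nonneg_left h2 hB.le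
      have hBL : B * L = M / 2 := by
        rw [hBdef]; field_simp
      simp only [hhdef]
      nlinarith
    refine (hw0 z).trans ?_
    exact_mod_cast h3
  have hSne : S.Nonempty := ⟨M, hMS⟩
  by_cases hbdd : BddBelow S
  case neg =>
    rw [not_bddBelow_iff] at hbdd
    obtain ⟨t, htS, ht0⟩ := hbdd 0
    have := htS 1 h1An
    refine this.trans ?_
    rw [hh1]
    exact_mod_cast (by linarith : -(M/2) + t ≤ -(M/2))
  case pos =>
  set s : ℝ := sInf S with hsdef
  have hstep : ∀ t : ℝ, s < t → t ∈ S := by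
    intro t ht
    obtain ⟨t', ht'S, ht't⟩ := exists_lt_of_csInf_lt hSne ht
    exact hup t' ht'S t ht't.le
  have hclaim : ∀ z ∈ An, w z ≤ ((h z + s : ℝ) : EReal) := by
    intro z hz
    apply my_ereal_le_coe_of_forall
    intro t ht
    have : (s + t) ∈ S := hstep (s + t) (by linarith)
    have := this z hz
    refine this.trans ?_
    exact_mod_cast (by linarith : h z + (s + t) ≤ h z + s + t)
  by_cases hs0 : s ≤ 0
  case pos =>
    refine (hclaim 1 h1An).trans ?_
    rw [hh1]
    exact_mod_cast (by linarith : -(M/2) + s ≤ -(M/2))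
  case neg =>
  push_neg at hs0
  exfalso
  -- the compact sets of near-maximum points
  set O : ℝ → Set ℂ := fun c => {z : ℂ | z ≠ 0 ∧ w z < ((h z + c : ℝ) : EReal)} with hOdef
  have hOopen : ∀ c : ℝ, IsOpen (O c) :=
    fun c => my_open_lt w husc (fun z => h z + c) (hcont.add continuousOn_const)
  have hOmono : ∀ c c' : ℝ, c ≤ c' → O c ⊆ O c' := by
    intro c c' hcc z hz
    refine ⟨hz.1, hz.2.trans_le ?_⟩
    exact_mod_cast (by linarith : h z + c ≤ h z + c')
  set K : ℕ → Set ℂ := fun n => {z | z ∈ An ∧ ((h z + (s - 1/(n+1)) : ℝ) : EReal) ≤ w z}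
    with hKdef
  have hKsub : ∀ n, K n ⊆ An := fun n z hz => hz.1
  have hKeq : ∀ n, K n = An \ O (s - 1/(n+1)) := by
    intro n
    ext z
    simp only [hKdef, hOdef, mem_setOf_eq, mem_diff, not_and, not_lt]
    constructor
    · rintro ⟨hzA, hzw⟩
      exact ⟨hzA, fun _ => hzw⟩
    · rintro ⟨hzA, hzw⟩
      exact ⟨hzA, hzw (hAnne0 z hzA)⟩
  have hKclosed : ∀ n, IsClosed (K n) := by
    intro n
    rw [hKeq n, diff_eq]
    exact hAnclosed.inter (hOopen _).isClosed_compl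
  have hKcomp : ∀ n, IsCompact (K n) :=
    fun n => hAncomp.of_isClosed_subset (hKclosed n) (hKsub n)
  have hKne : ∀ n, (K n).Nonempty := by
    intro n
    by_contra hemp
    rw [Set.not_nonempty_iff_eq_empty] at hemp
    have hmem : (s - 1/(n+1)) ∈ S := by
      intro z hz
      by_contra hzw
      push_neg at hzw
      have : z ∈ K n := ⟨hz, hzw.le⟩
      rw [hemp] at this
      exact this
    have h1 : s ≤ s - 1/(n+1) := csInf_le hbdd hmem
    have h2 : (0:ℝ) < 1/(n+1) := by positivity
    linarith
  have hKdec : ∀ n, K (n+1) ⊆ K n := by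
    intro n z hz
    refine ⟨hz.1, le_trans ?_ hz.2⟩
    have : (1:ℝ)/(n+1+1) ≤ 1/(n+1) := by
      apply one_div_le_one_div_of_le (by positivity)
      push_cast; linarith
    exact_mod_cast (by push_cast; linarith : h z + (s - 1/((n:ℝ)+1)) ≤ h z + (s - 1/((n+1:ℕ)+1)))
  have hKint : (⋂ n, K n).Nonempty :=
    IsCompact.nonempty_iInter_of_sequence_nonempty_isCompact_isClosed K hKdec hKne
      (hKcomp 0) hKclosed
  set Kinf : Set ℂ := ⋂ n, K n with hKinfdef
  have hKinfcomp : IsCompact Kinf :=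
    (hKcomp 0).of_isClosed_subset (isClosed_iInter hKclosed) (iInter_subset K 0)
  have hKw : ∀ z ∈ Kinf, ((h z + s : ℝ) : EReal) ≤ w z := by
    intro z hz
    apply my_ereal_coe_le_of_forall
    intro n
    have hzn : z ∈ K n := mem_iInter.mp hz n
    refine le_trans ?_ hzn.2
    exact_mod_cast (by ring_nf; exact le_refl _ : h z + s - 1/((n:ℝ)+1) ≤ h z + (s - 1/((n:ℝ)+1)))
  -- the extremal point
  obtain ⟨z0, hz0K, hz0max⟩ := hKinfcomp.exists_isMaxOn hKint
    continuous_norm.continuousOn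
  have hz0An : z0 ∈ An := (hKsub 0) (mem_iInter.mp hz0K 0)
  have hz0w : ((h z0 + s : ℝ) : EReal) ≤ w z0 := hKw z0 hz0K
  have hz0d : d < ‖z0‖ := by
    rcases lt_or_eq_of_le hz0An.1 with h' | h'
    · exact h'
    · exfalso
      have h1 : w z0 ≤ ((-M : ℝ) : EReal) := by
        apply hball
        simp only [mem_closedBall, Complex.dist_eq, sub_zero]
        exact le_of_eq h'.symm
      have h2 : h z0 = -M := hhd z0 h'.symm
      have := hz0w.trans h1
      rw [h2] at this
      have : -M + s ≤ -M := by exact_mod_cast this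
      linarith
  have hz0R : ‖z0‖ < R := by
    rcases lt_or_eq_of_le hz0An.2 with h' | h'
    · exact h'
    · exfalso
      have h2 : h z0 = 0 := hhR z0 h'
      have h3 := hz0w.trans (hw0 z0)
      rw [h2] at h3
      have : 0 + s ≤ 0 := by exact_mod_cast h3
      linarith
  have hz0ne : z0 ≠ 0 := hAnne0 z0 hz0An
  have hz0abs : 0 < ‖z0‖ := norm_pos_iff.mpr hz0ne
  -- the radius
  set ρ : ℝ := min ((‖z0‖ - d)/2) (min ((R - ‖z0‖)/2) (‖z0‖/4))
    with hρdef
  have hρ : 0 < ρ := by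
    apply lt_min (by linarith)
    exact lt_min (by linarith) (by linarith)
  have hρ1 : ρ ≤ (‖z0‖ - d)/2 := min_le_left _ _
  have hρ2 : ρ ≤ (R - ‖z0‖)/2 := le_trans (min_le_right _ _) (min_le_left _ _)
  have hρ3 : ρ ≤ ‖z0‖/4 := le_trans (min_le_right _ _) (min_le_right _ _)
  have hsph : ∀ ζ ∈ sphere z0 ρ, ζ ∈ An := by
    intro ζ hζ
    rw [mem_sphere, Complex.dist_eq] at hζ
    have htr1 : ‖z0‖ ≤ ‖ζ‖ + ρ := by
      have h0 := norm_sub_le ζ (ζ - z0)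
      simp only [sub_sub_cancel] at h0
      rw [← hζ]
      exact h0
    have htr2 : ‖ζ‖ ≤ ‖z0‖ + ρ := by
      calc ‖ζ‖ = ‖z0 + (ζ - z0)‖ := by ring_nf
      _ ≤ ‖z0‖ + ‖ζ - z0‖ := norm_add_le _ _
      _ = ‖z0‖ + ρ := by rw [hζ]
    constructor
    · linarith
    · linarith
  have hsphcb : sphere z0 ρ ⊆ closedBall z0 ρ := sphere_subset_closedBall
  -- the normalized direction function
  set w0 : ℂ := (((‖z0‖ * ρ)⁻¹ : ℝ) : ℂ) * (starRingEnd ℂ) z0 with hw0def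
  set μ : ℂ → ℂ := fun ζ => w0 * (ζ - z0) with hμdef
  have hμre : ∀ ζ : ℂ, (μ ζ).re = (‖z0‖ * ρ)⁻¹ * ((starRingEnd ℂ) z0 * (ζ - z0)).re := by
    intro ζ
    simp only [hμdef, hw0def, mul_assoc]
    exact Complex.re_ofReal_mul _ _
  have hμabs : ∀ ζ ∈ sphere z0 ρ, ‖μ ζ‖ = 1 := by
    intro ζ hζ
    rw [mem_sphere, Complex.dist_eq] at hζ
    simp only [hμdef, hw0def, norm_mul, Complex.norm_conj, Complex.norm_real, Real.norm_eq_abs, hζ]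
    rw [_root_.abs_of_nonneg (by positivity : (0:ℝ) ≤ (‖z0‖ * ρ)⁻¹)]
    field_simp
  have hμsq : ∀ ζ ∈ sphere z0 ρ, (μ ζ).re^2 + (μ ζ).im^2 = 1 := by
    intro ζ hζ
    have h1 := hμabs ζ hζ
    have h2 : Complex.normSq (μ ζ) = 1 := by
      rw [← Complex.sq_norm, h1]; norm_num
    rw [Complex.normSq_apply] at h2
    nlinarith [h2]
  -- the favorable arc
  set Aset : Set ℂ := sphere z0 ρ ∩ {ζ : ℂ | (1:ℝ)/2 ≤ (μ ζ).re} with hAsetdef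
  have hAsetcomp : IsCompact Aset := by
    apply (isCompact_sphere z0 ρ).inter_right
    apply isClosed_le continuous_const
    apply Complex.continuous_re.comp
    exact continuous_const.mul (continuous_id.sub continuous_const)
  have hAgt : ∀ ζ ∈ Aset, ‖z0‖ < ‖ζ‖ := by
    rintro ζ ⟨hζs, hζre⟩
    rw [mem_sphere, Complex.dist_eq] at hζs
    simp only [mem_setOf_eq] at hζre
    rw [hμre ζ] at hζre
    have hc : (0:ℝ) < ‖z0‖ * ρ := by positivity
    have h5 := mul_le_mul_of_nonneg_left hζre hc.le
    have h6 : (‖z0‖ * ρ) * ((‖z0‖ * ρ)⁻¹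
        * ((starRingEnd ℂ) z0 * (ζ - z0)).re) = ((starRingEnd ℂ) z0 * (ζ - z0)).re := by
      field_simp
    rw [h6] at h5
    have hnsq := my_normsq_split z0 ζ
    have hpos : 0 < Complex.normSq (ζ - z0) := by
      rw [← Complex.sq_norm, hζs]; positivity
    have hsqgt : Complex.normSq z0 < Complex.normSq ζ := by linarith
    apply my_abs_lt_of_sq _ _ (norm_nonneg z0) ?_ (norm_nonneg ζ)
    rw [Complex.sq_norm, Complex.sq_norm]
    exact hsqgt
  -- uniform gap on the arc
  have huni : ∃ η : ℝ, 0 < η ∧ ∀ ζ ∈ Aset, w ζ ≤ ((h ζ + s - η : ℝ) : EReal) := by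
    rcases Set.eq_empty_or_nonempty Aset with hA | hA
    · exact ⟨1, one_pos, by rw [hA]; intro ζ hζ; exact absurd hζ (notMem_empty ζ)⟩
    have hcover : Aset ⊆ ⋃ n : ℕ, O (s - 1/(n+1)) := by
      intro ζ hζ
      have hζAn : ζ ∈ An := hsph ζ hζ.1
      have hζK : ζ ∉ Kinf := by
        intro hmem
        exact absurd (hz0max hmem) (not_le.mpr (hAgt ζ hζ))
      rw [hKinfdef, mem_iInter] at hζK
      push_neg at hζK
      obtain ⟨n, hn⟩ := hζK
      have : ¬ ((h ζ + (s - 1/(n+1)) : ℝ) : EReal) ≤ w ζ := fun hc => hn ⟨hζAn, hc⟩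
      rw [not_le] at this
      exact mem_iUnion.mpr ⟨n, ⟨hAnne0 ζ hζAn, this⟩⟩
    obtain ⟨t, ht⟩ := hAsetcomp.elim_finite_subcover (fun n : ℕ => O (s - 1/(n+1)))
      (fun n => hOopen _) hcover
    have htne : t.Nonempty := by
      by_contra hte
      rw [Finset.not_nonempty_iff_eq_empty] at hte
      obtain ⟨ζ, hζ⟩ := hA
      have := ht hζ
      simp [hte] at this
    set N := t.max' htne with hN
    refine ⟨(1:ℝ)/((N:ℝ)+1), by positivity, fun ζ hζ => ?_⟩
    obtain ⟨n, hnt, hn⟩ := mem_iUnion₂.mp (ht hζ)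
    have hnN : n ≤ N := t.le_max' n hnt
    have hmono : O (s - 1/(n+1)) ⊆ O (s - 1/(N+1)) := by
      apply hOmono
      have h7 : (1:ℝ)/(N+1) ≤ 1/(n+1) := by
        apply one_div_le_one_div_of_le (by positivity)
        exact_mod_cast (by exact_mod_cast Nat.succ_le_succ hnN : (n:ℝ)+1 ≤ (N:ℝ)+1)
      linarith
    have := (hmono hn).2
    refine this.le.trans ?_
    exact_mod_cast (by linarith : h ζ + (s - 1/((N:ℝ)+1)) ≤ h ζ + s - 1/((N:ℝ)+1))
  obtain ⟨η, hη, hAbound⟩ := huni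
  -- the comparison polynomial
  set ε' : ℝ := η/48 with hε'def
  have hε' : 0 < ε' := by positivity
  set εlog : ℝ := ε'/(B+1) with hεlogdef
  have hεlog : 0 < εlog := by positivity
  have hBεlog : B * εlog ≤ ε' := by
    rw [hεlogdef]
    rw [mul_div_assoc']
    rw [div_le_iff₀ (by linarith)]
    nlinarith
  have hρhalf : ρ < ‖z0‖ / 2 := by linarith
  obtain ⟨P, hP⟩ := my_log_poly_approx z0 hz0ne ρ hρ hρhalf εlog hεlog
  set cc : ℝ := -(M/2) + B * Real.log (‖z0‖) + s + 2*ε' with hccdef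
  set Wp : Polynomial ℂ := Polynomial.C w0 * (Polynomial.X - Polynomial.C z0) with hWpdef
  set qpol : Polynomial ℂ := -(Polynomial.C (((1:ℝ)/8 : ℝ) : ℂ))
      - Polynomial.C (((3:ℝ)/8 : ℝ) : ℂ) * Wp
      - Polynomial.C (((3:ℝ)/8 : ℝ) : ℂ) * (Wp * Wp)
      - Polynomial.C (((1:ℝ)/8 : ℝ) : ℂ) * (Wp * Wp * Wp) with hqdef
  set pp : Polynomial ℂ := Polynomial.C ((cc : ℝ) : ℂ) + Polynomial.C ((B : ℝ) : ℂ) * P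
      + Polynomial.C ((η : ℝ) : ℂ) * qpol with hppdef
  have hWeval : ∀ ζ : ℂ, Wp.eval ζ = μ ζ := by
    intro ζ
    simp [hWpdef, hμdef]
  have hqre : ∀ ζ : ℂ, (qpol.eval ζ).re = -1/8 - 3/8*(μ ζ).re
      - 3/8*((μ ζ).re*(μ ζ).re - (μ ζ).im*(μ ζ).im)
      - 1/8*(((μ ζ).re*(μ ζ).re - (μ ζ).im*(μ ζ).im)*(μ ζ).re
          - ((μ ζ).re*(μ ζ).im + (μ ζ).im*(μ ζ).re)*(μ ζ).im) := by
    intro ζ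
    have he : qpol.eval ζ = -((((1:ℝ)/8 : ℝ) : ℂ)) - (((3:ℝ)/8 : ℝ) : ℂ) * μ ζ
        - (((3:ℝ)/8 : ℝ) : ℂ) * (μ ζ * μ ζ) - (((1:ℝ)/8 : ℝ) : ℂ) * (μ ζ * μ ζ * μ ζ) := by
      simp only [hqdef, Polynomial.eval_sub, Polynomial.eval_neg, Polynomial.eval_mul,
        Polynomial.eval_C, hWeval ζ]
    rw [he]
    simp only [Complex.sub_re, Complex.sub_im, Complex.neg_re, Complex.mul_re, Complex.mul_im,
      Complex.ofReal_re, Complex.ofReal_im]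
    ring
  have hppre : ∀ ζ : ℂ, (pp.eval ζ).re = cc + B * (P.eval ζ).re + η * (qpol.eval ζ).re := by
    intro ζ
    simp only [hppdef, Polynomial.eval_add, Polynomial.eval_mul, Polynomial.eval_C]
    simp only [Complex.add_re, Complex.re_ofReal_mul, Complex.ofReal_re]
  have hlogre : ∀ ζ, ζ ≠ 0 → ζ ∈ closedBall z0 ρ →
      |(P.eval ζ).re - (Real.log (‖ζ‖) - Real.log (‖z0‖))| ≤ εlog := by
    intro ζ hζ0 hζcb
    have h1 := hP ζ hζcb
    have h2 : (Complex.log (ζ / z0)).re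
        = Real.log (‖ζ‖) - Real.log (‖z0‖) := by
      rw [Complex.log_re, norm_div]
      exact Real.log_div (norm_ne_zero_iff.mpr hζ0) (norm_ne_zero_iff.mpr hz0ne)
    have h3 : |(P.eval ζ - Complex.log (ζ / z0)).re| ≤ εlog :=
      le_trans (Complex.abs_re_le_norm _) h1
    rw [Complex.sub_re, h2] at h3
    exact h3
  have hsphbound : ∀ ζ ∈ sphere z0 ρ, w ζ ≤ (((pp.eval ζ).re : ℝ) : EReal) := by
    intro ζ hζs
    have hζAn : ζ ∈ An := hsph ζ hζs
    have hζ0 : ζ ≠ 0 := hAnne0 ζ hζAn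
    have hζcb : ζ ∈ closedBall z0 ρ := hsphcb hζs
    have hlre := hlogre ζ hζ0 hζcb
    have habs' := abs_le.mp hlre
    have hre1 : h ζ + s + ε' + η * (qpol.eval ζ).re ≤ (pp.eval ζ).re := by
      rw [hppre ζ]
      have h4 : Real.log (‖ζ‖) - Real.log (‖z0‖) - εlog
          ≤ (P.eval ζ).re := by linarith [habs'.1]
      have h5 : B * (Real.log (‖ζ‖) - Real.log (‖z0‖) - εlog)
          ≤ B * (P.eval ζ).re := mul_le_mul_of_nonneg_left h4 hB.le
      simp only [hhdef, hccdef]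
      nlinarith [hBεlog]
    have hsq := hμsq ζ hζs
    by_cases hx : (μ ζ).re ≤ 1/2
    case pos =>
      have hq0 := my_q_nonneg (μ ζ).re (μ ζ).im hsq hx
      rw [← hqre ζ] at hq0
      have : h ζ + s ≤ (pp.eval ζ).re := by nlinarith
      refine (hclaim ζ hζAn).trans ?_
      exact_mod_cast this
    case neg =>
      push_neg at hx
      have hζA : ζ ∈ Aset := ⟨hζs, by simp only [mem_setOf_eq]; linarith⟩
      have hq1 := my_q_ge_neg_one (μ ζ).re (μ ζ).im hsq
      rw [← hqre ζ] at hq1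
      have : h ζ + s - η ≤ (pp.eval ζ).re := by nlinarith
      refine (hAbound ζ hζA).trans ?_
      exact_mod_cast this
  have hcenter := hcomp z0 ρ hρ pp hsphbound z0 (mem_closedBall_self hρ.le)
  have hcval : (pp.eval z0).re ≤ h z0 + s - η/16 := by
    rw [hppre z0]
    have hμ0 : μ z0 = 0 := by simp [hμdef]
    have hq0 : (qpol.eval z0).re = -(1/8 : ℝ) := by
      rw [hqre z0, hμ0]
      norm_num
    have hP0 : (P.eval z0).re ≤ εlog := by
      have h1 := hP z0 (mem_closedBall_self hρ.le)
      rw [div_self hz0ne, Complex.log_one, sub_zero] at h1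
      exact le_trans (Complex.re_le_norm _) h1
    have h6 : B * (P.eval z0).re ≤ ε' := by
      refine le_trans (mul_le_mul_of_nonneg_left hP0 hB.le) hBεlog
    rw [hq0]
    simp only [hhdef, hccdef]
    nlinarith
  have hfin : ((h z0 + s : ℝ) : EReal) ≤ ((h z0 + s - η/16 : ℝ) : EReal) := by
    refine hz0w.trans (hcenter.trans ?_)
    exact_mod_cast hcval
  have : h z0 + s ≤ h z0 + s - η/16 := by exact_mod_cast hfin
  linarith

end AuxLiouville

/-- Liouville-type vanishing: for `α_1,…,α_n > 0`, if `u : D_α → [0,1)` is log-plurisubharmonic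
and vanishes at some `a ∈ D_α` with `a_n = 0`, then `u` vanishes identically on
`ℂ^{n-1} × {0} ⊆ D_α`. -/
theorem log_psh_vanishes_on_hyperplane {n : ℕ} (hn : 2 ≤ n)
    (α : Fin n → ℝ) (hpos : ∀ j, 0 < α j)
    (u : (Fin n → ℂ) → ℝ)
    (hu01 : ∀ z ∈ reinhardt α, u z ∈ Ico (0 : ℝ) 1)
    (hpsh : PlurisubharmonicOnE (fun z => erealLog (u z)) (reinhardt α))
    (a : Fin n → ℂ) (ha : a ∈ reinhardt α)
    (han : a ⟨n - 1, by omega⟩ = 0) (hua : u a = 0) :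
    ∀ z : Fin n → ℂ, z ⟨n - 1, by omega⟩ = 0 → u z = 0 := by
  intro z hz
  have hplane : ∀ y : Fin n → ℂ, y ⟨n - 1, by omega⟩ = 0 → y ∈ reinhardt α := by
    intro y hy
    constructor
    · intro j hj
      exact absurd (hpos j) (not_lt.mpr hj.le)
    · have hzero : absPow α y = 0 := by
        apply Finset.prod_eq_zero (Finset.mem_univ (⟨n - 1, by omega⟩ : Fin n))
        rw [hy, norm_zero]
        exact Real.zero_rpow (hpos _).ne'
      rw [hzero]; norm_num
  have hline : ∀ lam : ℂ, (a + lam • (z - a)) ⟨n - 1, by omega⟩ = 0 := by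
    intro lam
    simp only [Pi.add_apply, Pi.smul_apply, Pi.sub_apply, smul_eq_mul, han, hz]
    ring
  have hmem : ∀ lam : ℂ, a + lam • (z - a) ∈ reinhardt α :=
    fun lam => hplane _ (hline lam)
  have hU : {lam : ℂ | a + lam • (z - a) ∈ reinhardt α} = univ := eq_univ_of_forall hmem
  have hsub := hpsh.2 a (z - a)
  rw [hU] at hsub
  obtain ⟨huscOn, hcompOn⟩ := hsub
  set wf : ℂ → EReal := fun lam => erealLog (u (a + lam • (z - a))) with hwf
  have husc : UpperSemicontinuous wf := upperSemicontinuousOn_univ_iff.mp huscOn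
  have hcomp : ∀ (c : ℂ) (r : ℝ), 0 < r → ∀ p : Polynomial ℂ,
      (∀ ζ ∈ sphere c r, wf ζ ≤ (((p.eval ζ).re : ℝ) : EReal)) →
      ∀ ζ ∈ closedBall c r, wf ζ ≤ (((p.eval ζ).re : ℝ) : EReal) :=
    fun c r hr => hcompOn c r hr (subset_univ _)
  have hw0 : ∀ lam : ℂ, wf lam ≤ (0 : EReal) := by
    intro lam
    simp only [hwf, erealLog]
    split_ifs with hle
    · exact bot_le
    · push_neg at hle
      have := (hu01 _ (hmem lam)).2
      have hlog : Real.log (u (a + lam • (z - a))) ≤ 0 := Real.log_nonpos hle.le this.le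
      exact_mod_cast hlog
  have hw00 : wf 0 = ⊥ := by
    have h0 : a + (0:ℂ) • (z - a) = a := by rw [zero_smul, add_zero]
    simp only [hwf, h0, hua, erealLog, if_pos le_rfl]
  have hbot : wf 1 = ⊥ := by
    apply my_ereal_bot_of_forall
    intro t
    rcases le_or_gt 0 t with ht | ht
    · refine (hw0 1).trans ?_
      exact_mod_cast ht
    · set M : ℝ := -2*t with hM
      have hMpos : 0 < M := by rw [hM]; linarith
      have h1 : wf 0 < ((-M : ℝ) : EReal) := by rw [hw00]; exact EReal.bot_lt_coe _
      have h2 := husc 0 _ h1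
      rw [Metric.eventually_nhds_iff] at h2
      obtain ⟨ε, hε, hev⟩ := h2
      set d : ℝ := min (ε/2) (1/2) with hd
      have hd0 : 0 < d := by apply lt_min (by linarith) (by norm_num)
      have hd12 : d ≤ 1/2 := min_le_right _ _
      have hball : ∀ y ∈ closedBall (0:ℂ) d, wf y ≤ ((-M : ℝ) : EReal) := by
        intro y hy
        apply le_of_lt
        apply hev
        rw [mem_closedBall] at hy
        have : d < ε := lt_of_le_of_lt (min_le_left _ _) (by linarith)
        linarith
      have := my_annulus wf husc hcomp hw0 M d hMpos hd0 hd12 hball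
      have heq : -(M/2) = t := by rw [hM]; ring
      rwa [heq] at this
  have hz1 : a + (1:ℂ) • (z - a) = z := by
    rw [one_smul]; abel
  have hbot2 : erealLog (u (a + (1:ℂ) • (z - a))) = ⊥ := hbot
  rw [hz1] at hbot2
  simp only [erealLog] at hbot2
  split_ifs at hbot2 with hle
  · exact le_antisymm hle (hu01 z (hplane z hz)).1
  · exact absurd hbot2 (EReal.coe_ne_bot _)
end

section
/- Let v : 𝔻 → [0,1) satisfy: log v is subharmonic on 𝔻, v(0) = 0, and v² is of class C² in some neighborhood of 0. Then v(ζ) ≤ |ζ| for every ζ ∈ 𝔻. -/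
open Complex Set Metric
open scoped Classical

lemma erealLog_le_coe_iff {x c : ℝ} : erealLog x ≤ (c : EReal) ↔ x ≤ Real.exp c := by
  unfold erealLog
  split_ifs with h
  · simp only [bot_le, true_iff]
    exact h.trans (Real.exp_pos c).le
  · push_neg at h
    rw [EReal.coe_le_coe_iff, Real.log_le_iff_le_exp h]

lemma usc_of_usc_erealLog {v : ℂ → ℝ} {s : Set ℂ}
    (h : UpperSemicontinuousOn (fun ζ => erealLog (v ζ)) s)
    (h0 : ∀ x ∈ s, 0 ≤ v x) : UpperSemicontinuousOn v s := by
  intro x hx y hy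
  have hy0 : 0 < y := lt_of_le_of_lt (h0 x hx) hy
  have hlt : erealLog (v x) < ((Real.log y : ℝ) : EReal) := by
    unfold erealLog
    split_ifs with hv
    · exact EReal.bot_lt_coe _
    · push_neg at hv
      exact_mod_cast Real.log_lt_log hv hy
  filter_upwards [h x hx _ hlt, self_mem_nhdsWithin] with z hz hzs
  by_cases hvz : v z ≤ 0
  · exact lt_of_le_of_lt hvz hy0
  · push_neg at hvz
    unfold erealLog at hz
    rw [if_neg (not_le.2 hvz)] at hz
    rw [EReal.coe_lt_coe_iff] at hz
    exact (Real.log_lt_log_iff hvz hy0).1 hz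

lemma usc_mul_cont {f g : ℂ → ℝ} {s : Set ℂ}
    (hf : UpperSemicontinuousOn f s) (hf0 : ∀ x ∈ s, 0 ≤ f x)
    (hg : ContinuousOn g s) (hg0 : ∀ x ∈ s, 0 < g x) :
    UpperSemicontinuousOn (fun x => f x * g x) s := by
  intro x hx y hy
  have hfx : 0 ≤ f x := hf0 x hx
  have hgx : 0 < g x := hg0 x hx
  have hy' : f x * g x < y := hy
  have hy0 : 0 < y := lt_of_le_of_lt (mul_nonneg hfx hgx.le) hy'
  set c : ℝ := (f x + y / g x) / 2 with hc
  have hfxc : f x < c := by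
    have : f x < y / g x := (lt_div_iff₀ hgx).2 (by linarith [hy'])
    simp only [hc]; linarith
  have hc0 : 0 < c := lt_of_le_of_lt hfx hfxc
  have hgc : g x < y / c := by
    have h1 : c < y / g x := by
      have : f x < y / g x := (lt_div_iff₀ hgx).2 (by linarith [hy'])
      simp only [hc]; linarith
    rw [lt_div_iff₀ hc0]
    calc g x * c = c * g x := mul_comm _ _
    _ < (y / g x) * g x := by exact mul_lt_mul_of_pos_right h1 hgx
    _ = y := div_mul_cancel₀ _ hgx.ne'
  filter_upwards [hf x hx c hfxc, (hg x hx).eventually (Filter.Tendsto.eventually_lt_const hgc (by exact fun ⦃U⦄ a => a)), self_mem_nhdsWithin] with z hfz hgz hzs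
  calc f z * g z < c * g z := mul_lt_mul_of_pos_right hfz (hg0 z hzs)
  _ ≤ c * (y / c) := by
      apply mul_le_mul_of_nonneg_left (le_of_lt hgz) hc0.le
  _ = y := mul_div_cancel₀ _ hc0.ne'

lemma usc_exists_max {f : ℂ → ℝ} {K : Set ℂ} (hK : IsCompact K) (hne : K.Nonempty)
    (hf : UpperSemicontinuousOn f K) (hB : ∃ B, ∀ x ∈ K, f x ≤ B) :
    ∃ z ∈ K, ∀ x ∈ K, f x ≤ f z := by
  obtain ⟨B, hB⟩ := hB
  set S := sSup (f '' K) with hS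
  have hne' : (f '' K).Nonempty := hne.image f
  have hbdd : BddAbove (f '' K) := ⟨B, by rintro _ ⟨x, hx, rfl⟩; exact hB x hx⟩
  have hsel : ∀ n : ℕ, ∃ x, x ∈ K ∧ S - 1 / (n + 1) < f x := by
    intro n
    have hlt : S - 1 / (n + 1) < S := by
      have : (0:ℝ) < 1 / (n + 1) := by positivity
      linarith
    obtain ⟨_, ⟨x, hx, rfl⟩, hx2⟩ := exists_lt_of_lt_csSup hne' hlt
    exact ⟨x, hx, hx2⟩
  choose u hu hu2 using hsel
  obtain ⟨z, hz, φ, hφ, htend⟩ := hK.tendsto_subseq hu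
  refine ⟨z, hz, fun x hx => ?_⟩
  have hxS : f x ≤ S := le_csSup hbdd ⟨x, hx, rfl⟩
  refine hxS.trans ?_
  by_contra hcon
  push_neg at hcon
  set y := (f z + S) / 2 with hy
  have h1 : f z < y := by simp only [hy]; linarith
  have h2 : y < S := by simp only [hy]; linarith
  have htw : Filter.Tendsto (u ∘ φ) Filter.atTop (nhdsWithin z K) := by
    rw [tendsto_nhdsWithin_iff]
    exact ⟨htend, Filter.Eventually.of_forall fun n => hu (φ n)⟩
  have hev : ∀ᶠ n in Filter.atTop, f ((u ∘ φ) n) < y := htw.eventually (hf z hz y h1)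
  obtain ⟨N, hN⟩ := exists_nat_one_div_lt (show (0:ℝ) < S - y by linarith)
  obtain ⟨n, hn1, hn2⟩ := (hev.and (Filter.eventually_ge_atTop N)).exists
  have h3 : S - 1 / (φ n + 1) < f ((u ∘ φ) n) := hu2 (φ n)
  have h4 : (1 : ℝ) / (φ n + 1) ≤ 1 / (N + 1) := by
    apply one_div_le_one_div_of_le (by positivity)
    have hNn : N ≤ φ n := hn2.trans hφ.le_apply
    have : (N:ℝ) ≤ (φ n : ℝ) := by exact_mod_cast hNn
    linarith
  linarith

lemma poly_approx {Ω : Set ℂ} (hΩ : IsOpen Ω) {G : ℂ → ℂ} (hG : DifferentiableOn ℂ G Ω)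
    {z : ℂ} {δ : ℝ} (hδ : 0 < δ) (hsub : closedBall z δ ⊆ Ω) {η : ℝ} (hη : 0 < η) :
    ∃ P : Polynomial ℂ, ∀ lam ∈ closedBall z δ, ‖G lam - P.eval lam‖ ≤ η := by
  obtain ⟨ε, hε, hthick⟩ := (isCompact_closedBall z δ).exists_cthickening_subset_open hΩ hsub
  rw [cthickening_closedBall hε.le hδ.le] at hthick
  set R : NNReal := ⟨δ + ε, by positivity⟩ with hR
  have hRball : closedBall z (R : ℝ) ⊆ Ω := by
    show closedBall z (δ + ε) ⊆ Ω
    rw [add_comm]; exact hthick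
  have hps := (hG.mono hRball).hasFPowerSeriesOnBall (by exact_mod_cast (by positivity : (0:ℝ) < δ + ε))
  set r' : NNReal := ⟨δ + ε / 2, by positivity⟩ with hr'
  have hr'R : (r' : ENNReal) < (R : ENNReal) := by
    rw [ENNReal.coe_lt_coe]
    rw [← NNReal.coe_lt_coe]
    simp only [hr', hR, NNReal.coe_mk]
    show δ + ε / 2 < δ + ε
    linarith
  have htu := hps.tendstoUniformlyOn' hr'R
  rw [Metric.tendstoUniformlyOn_iff] at htu
  obtain ⟨n, hn⟩ := (htu η hη).exists
  set ps := cauchyPowerSeries G z R with hps'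
  refine ⟨∑ i ∈ Finset.range n, Polynomial.C (ps.coeff i) * (Polynomial.X - Polynomial.C z) ^ i,
    fun lam hlam => ?_⟩
  have hmem : lam ∈ ball z (r' : ℝ) := by
    rw [mem_ball]
    rw [mem_closedBall] at hlam
    have : (r' : ℝ) = δ + ε / 2 := rfl
    rw [this]; linarith
  have := hn lam hmem
  rw [dist_eq_norm] at this
  have heq : (Polynomial.eval lam (∑ i ∈ Finset.range n,
      Polynomial.C (ps.coeff i) * (Polynomial.X - Polynomial.C z) ^ i)) =
      ps.partialSum n (lam - z) := by
    rw [Polynomial.eval_finset_sum]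
    unfold FormalMultilinearSeries.partialSum
    refine Finset.sum_congr rfl fun i _ => ?_
    rw [FormalMultilinearSeries.apply_eq_pow_smul_coeff, smul_eq_mul]
    simp [mul_comm]
  rw [heq]
  calc ‖G lam - ps.partialSum n (lam - z)‖ = ‖G lam - ps.partialSum n (lam - z)‖ := rfl
  _ ≤ η := this.le

lemma sq_bound {v : ℂ → ℝ} {V : Set ℂ} (hVo : IsOpen V) (hV0 : (0:ℂ) ∈ V)
    (hC2 : ContDiffOn ℝ 2 (fun ζ => (v ζ) ^ 2) V) (hv0 : v 0 = 0)
    (hvnn : ∀ ζ ∈ V, 0 ≤ v ζ) :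
    ∃ C t : ℝ, 0 < C ∧ 0 < t ∧ ∀ x : ℂ, ‖x‖ ≤ t → v x ≤ C * ‖x‖ := by
  set f : ℂ → ℝ := fun ζ => (v ζ) ^ 2 with hfdef
  have hf0 : f 0 = 0 := by simp [hfdef, hv0]
  have hmin : IsLocalMin f 0 := by
    apply Filter.Eventually.of_forall
    intro x
    rw [hf0]
    exact sq_nonneg _
  have hf'0 : fderiv ℝ f 0 = 0 := hmin.fderiv_eq_zero
  obtain ⟨t, ht, htV⟩ : ∃ t > 0, closedBall (0:ℂ) t ⊆ V := by
    obtain ⟨t, ht, h⟩ := Metric.nhds_basis_closedBall.mem_iff.1 (hVo.mem_nhds hV0)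
    exact ⟨t, ht, h⟩
  have hf1 : ContDiffOn ℝ 1 (fderiv ℝ f) V := hC2.fderiv_of_isOpen hVo (by norm_num)
  have hf'cont : ContinuousOn (fderiv ℝ (fderiv ℝ f)) V :=
    hf1.continuousOn_fderiv_of_isOpen hVo le_rfl
  obtain ⟨M, hM⟩ := (isCompact_closedBall (0:ℂ) t).exists_bound_of_continuousOn
    (f := fderiv ℝ (fderiv ℝ f)) (by exact hf'cont.mono htV)
  have hM0 : 0 ≤ M := le_trans (norm_nonneg _) (hM 0 (mem_closedBall_self ht.le))
  have hdiff1 : ∀ x ∈ closedBall (0:ℂ) t, DifferentiableAt ℝ (fderiv ℝ f) x := fun x hx =>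
    (hf1.differentiableOn one_ne_zero).differentiableAt (hVo.mem_nhds (htV hx))
  have hlip : ∀ x ∈ closedBall (0:ℂ) t, ‖fderiv ℝ f x‖ ≤ M * ‖x‖ := by
    intro x hx
    have h := Convex.norm_image_sub_le_of_norm_fderiv_le hdiff1 (fun y hy => hM y hy)
      (convex_closedBall _ _) (mem_closedBall_self ht.le) hx
    rw [hf'0, sub_zero, sub_zero] at h
    exact h
  have hdiff0 : ∀ x ∈ closedBall (0:ℂ) t, DifferentiableAt ℝ f x := fun x hx =>
    (hC2.differentiableOn (by norm_num)).differentiableAt (hVo.mem_nhds (htV hx))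
  have hquad : ∀ x : ℂ, ‖x‖ ≤ t → f x ≤ M * (‖x‖) ^ 2 := by
    intro x hx
    have hxn : ‖x‖ = ‖x‖ := rfl
    have hxball : closedBall (0:ℂ) ‖x‖ ⊆ closedBall 0 t :=
      closedBall_subset_closedBall (by rw [hxn]; exact hx)
    have hmvt := Convex.norm_image_sub_le_of_norm_fderiv_le
      (fun y hy => hdiff0 y (hxball hy))
      (fun y hy => (hlip y (hxball hy)).trans
        (mul_le_mul_of_nonneg_left (by simpa [Complex.dist_eq] using hy) hM0))
      (convex_closedBall _ _) (mem_closedBall_self (norm_nonneg x))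
      (show x ∈ closedBall (0:ℂ) ‖x‖ by
        rw [mem_closedBall, dist_zero_right])
    rw [hf0, sub_zero, sub_zero] at hmvt
    calc f x ≤ ‖f x‖ := le_abs_self _
    _ ≤ M * ‖x‖ * ‖x‖ := hmvt
    _ = M * (‖x‖) ^ 2 := by rw [hxn]; ring
  refine ⟨Real.sqrt M + 1, t, by positivity, ht, fun x hx => ?_⟩
  have h1 : 0 ≤ v x := hvnn x (htV (by rw [mem_closedBall, Complex.dist_eq, sub_zero]; exact hx))
  have h2 : (v x) ^ 2 ≤ M * (‖x‖) ^ 2 := hquad x hx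
  by_contra hcon
  push_neg at hcon
  have hs : Real.sqrt M ^ 2 = M := Real.sq_sqrt hM0
  have hsn : 0 ≤ Real.sqrt M := Real.sqrt_nonneg M
  have han : 0 ≤ ‖x‖ := norm_nonneg x
  have hsum : 0 < v x + (Real.sqrt M + 1) * ‖x‖ := by nlinarith
  nlinarith [mul_pos hsum (show (0:ℝ) < v x - (Real.sqrt M + 1) * ‖x‖ by linarith),
    h2, hs, mul_nonneg (mul_nonneg hsn han) han, mul_nonneg han han]

lemma annulus_bound (v : ℂ → ℝ)
    (hv01 : ∀ ζ ∈ ball (0 : ℂ) 1, v ζ ∈ Ico (0 : ℝ) 1)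
    (hsub : SubharmonicOnE (fun ζ => erealLog (v ζ)) (ball (0 : ℂ) 1))
    {a b ε ρ r : ℝ} (hρ : 0 < ρ) (hρr : ρ < r) (hr : r < 1) (hε : 0 < ε)
    (hbdρ : ∀ lam : ℂ, ‖lam‖ = ρ → v lam ≤ Real.exp (a * Real.log ρ + b))
    (hbdr : ∀ lam : ℂ, ‖lam‖ = r → v lam ≤ Real.exp (a * Real.log r + b)) :
    ∀ lam : ℂ, ρ ≤ ‖lam‖ → ‖lam‖ ≤ r →
      v lam ≤ Real.exp (a * Real.log (‖lam‖) + b +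
        ε * (r ^ 2 - (‖lam‖) ^ 2)) := by
  set ψ : ℂ → ℝ := fun lam => a * Real.log (‖lam‖) + b +
    ε * (r ^ 2 - (‖lam‖) ^ 2) with hψdef
  set A : Set ℂ := closedBall 0 r ∩ (ball 0 ρ)ᶜ with hAdef
  have hmemA : ∀ lam : ℂ, lam ∈ A ↔ ρ ≤ ‖lam‖ ∧ ‖lam‖ ≤ r := by
    intro lam
    simp [hAdef, Complex.dist_eq, not_lt, and_comm]
  have hAball : A ⊆ ball 0 1 := by
    intro lam hlam
    rw [hmemA] at hlam
    rw [mem_ball, Complex.dist_eq, sub_zero]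
    exact lt_of_le_of_lt hlam.2 hr
  have hAcomp : IsCompact A := (isCompact_closedBall 0 r).inter_right isOpen_ball.isClosed_compl
  have hAne : A.Nonempty := by
    refine ⟨(r : ℂ), ?_⟩
    rw [hmemA]
    rw [Complex.norm_of_nonneg (hρ.trans hρr).le]
    exact ⟨hρr.le, le_refl r⟩
  have habs_pos : ∀ lam ∈ A, 0 < ‖lam‖ := fun lam hlam =>
    lt_of_lt_of_le hρ ((hmemA lam).1 hlam).1
  have hψcont : ContinuousOn ψ A := by
    have hlog : ContinuousOn (fun lam : ℂ => Real.log (‖lam‖)) A := by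
      intro lam hlam
      exact ((Real.continuousAt_log (habs_pos lam hlam).ne').comp
        continuous_norm.continuousAt).continuousWithinAt
    exact ((hlog.const_smul a).add continuousOn_const).add
      (continuousOn_const.mul (continuousOn_const.sub
        ((continuous_norm.continuousOn).pow 2)))
  set F : ℂ → ℝ := fun lam => v lam * Real.exp (-ψ lam) with hFdef
  have hgcont : ContinuousOn (fun lam => Real.exp (-ψ lam)) A :=
    Real.continuous_exp.comp_continuousOn hψcont.neg
  have hF_usc : UpperSemicontinuousOn F A :=
    usc_mul_cont ((usc_of_usc_erealLog hsub.1 (fun x hx => (hv01 x hx).1)).mono hAball)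
      (fun x hx => (hv01 x (hAball hx)).1) hgcont (fun x _ => Real.exp_pos _)
  have hFB : ∃ B, ∀ x ∈ A, F x ≤ B := by
    obtain ⟨Cb, hCb⟩ := hAcomp.exists_bound_of_continuousOn hgcont
    refine ⟨Cb, fun x hx => ?_⟩
    have h1 : v x ≤ 1 := (hv01 x (hAball hx)).2.le
    calc F x ≤ 1 * Real.exp (-ψ x) :=
          mul_le_mul_of_nonneg_right h1 (Real.exp_pos _).le
    _ = Real.exp (-ψ x) := one_mul _
    _ ≤ ‖Real.exp (-ψ x)‖ := le_abs_self _
    _ ≤ Cb := hCb x hx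
  obtain ⟨z₀, hz₀A, hmax⟩ := usc_exists_max hAcomp hAne hF_usc hFB
  -- key claim
  have hkey : F z₀ ≤ 1 := by
    by_contra hS
    push_neg at hS
    set S := F z₀ with hSdef
    have hSpos : (0:ℝ) < S := lt_trans one_pos hS
    have hρ2r2 : ρ ^ 2 < r ^ 2 := by nlinarith
    -- z₀ is strictly inside the annulus
    have hz₀ρ : ρ < ‖z₀‖ := by
      rcases lt_or_eq_of_le ((hmemA z₀).1 hz₀A).1 with h | h
      · exact h
      · exfalso
        have hb := hbdρ z₀ h.symm
        have : S ≤ Real.exp (a * Real.log ρ + b) * Real.exp (-ψ z₀) :=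
          mul_le_mul_of_nonneg_right hb (Real.exp_pos _).le
        rw [← Real.exp_add] at this
        have hψz : ψ z₀ = a * Real.log ρ + b + ε * (r ^ 2 - ρ ^ 2) := by
          show a * Real.log (‖z₀‖) + b + ε * (r ^ 2 - ‖z₀‖ ^ 2) = _
          rw [← h]
        have : S ≤ Real.exp (-(ε * (r ^ 2 - ρ ^ 2))) := by
          convert this using 2
          rw [hψz]; ring
        have h2 : Real.exp (-(ε * (r ^ 2 - ρ ^ 2))) ≤ 1 := by
          rw [Real.exp_le_one_iff]
          nlinarith
        linarith
    have hz₀r : ‖z₀‖ < r := by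
      rcases lt_or_eq_of_le ((hmemA z₀).1 hz₀A).2 with h | h
      · exact h
      · exfalso
        have hb := hbdr z₀ h
        have : S ≤ Real.exp (a * Real.log r + b) * Real.exp (-ψ z₀) :=
          mul_le_mul_of_nonneg_right hb (Real.exp_pos _).le
        rw [← Real.exp_add] at this
        have hψz : ψ z₀ = a * Real.log r + b := by
          show a * Real.log (‖z₀‖) + b + ε * (r ^ 2 - ‖z₀‖ ^ 2) = _
          rw [h]; ring
        have : S ≤ Real.exp 0 := by
          convert this using 2
          rw [hψz]; ring
        rw [Real.exp_zero] at this
        linarith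
    set δ : ℝ := min (‖z₀‖ - ρ) (r - ‖z₀‖) with hδdef
    have hδ : 0 < δ := lt_min (by linarith) (by linarith)
    have hδz : δ < ‖z₀‖ :=
      lt_of_le_of_lt (min_le_left _ _) (by linarith)
    have hz₀ne : z₀ ≠ 0 := by
      intro h
      rw [h] at hz₀ρ; simp at hz₀ρ; linarith
    have hball_sub : closedBall z₀ δ ⊆ A := by
      intro μ hμ
      rw [mem_closedBall, Complex.dist_eq] at hμ
      rw [hmemA]
      constructor
      · have h1 : ‖z₀‖ - ‖μ‖ ≤ ‖z₀ - μ‖ :=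
          norm_sub_norm_le z₀ μ
        have h2 : ‖z₀ - μ‖ = ‖μ - z₀‖ := norm_sub_rev z₀ μ
        have h3 : δ ≤ ‖z₀‖ - ρ := min_le_left _ _
        linarith
      · have h1 : ‖μ‖ ≤ ‖z₀‖ + ‖μ - z₀‖ := by
          calc ‖μ‖ = ‖z₀ + (μ - z₀)‖ := by rw [add_sub_cancel]
          _ ≤ _ := norm_add_le _ _
        have h3 : δ ≤ r - ‖z₀‖ := min_le_right _ _
        linarith
    -- the holomorphic comparison function
    set G : ℂ → ℂ := fun μ => (a : ℂ) * Complex.log (μ / z₀) -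
      2 * (ε : ℂ) * ((starRingEnd ℂ) z₀) * (μ - z₀) with hGdef
    set Ω : Set ℂ := (fun μ => μ / z₀) ⁻¹' Complex.slitPlane with hΩdef
    have hΩo : IsOpen Ω := Complex.isOpen_slitPlane.preimage (continuous_id.div_const z₀)
    have hGd : DifferentiableOn ℂ G Ω := by
      intro μ hμ
      refine DifferentiableAt.differentiableWithinAt ?_
      have h1 : DifferentiableAt ℂ (fun μ : ℂ => Complex.log (μ / z₀)) μ :=
        (Complex.differentiableAt_log hμ).comp (g := Complex.log) μ (differentiableAt_id.div_const z₀)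
      exact (h1.const_mul _).sub ((differentiableAt_id.sub_const z₀).const_mul _)
    have hbΩ : closedBall z₀ δ ⊆ Ω := by
      intro μ hμ
      rw [mem_closedBall, Complex.dist_eq] at hμ
      rw [hΩdef, mem_preimage, Complex.mem_slitPlane_iff]
      left
      have hz₀abs : (0:ℝ) < ‖z₀‖ := hρ.trans hz₀ρ
      have heq : μ / z₀ = 1 + (μ - z₀) / z₀ := by field_simp; ring
      have h1 : -(‖(μ - z₀) / z₀‖) ≤ ((μ - z₀) / z₀).re :=
        (abs_le.1 (Complex.abs_re_le_norm _)).1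
      have h2 : ‖(μ - z₀) / z₀‖ ≤ δ / ‖z₀‖ := by
        rw [norm_div]
        gcongr
      have h3 : δ / ‖z₀‖ < 1 := (div_lt_one hz₀abs).2 hδz
      rw [heq, Complex.add_re, Complex.one_re]
      linarith
    have hz₀abs : (0:ℝ) < ‖z₀‖ := hρ.trans hz₀ρ
    have hGre : ∀ μ : ℂ, ‖μ‖ ≠ 0 → (G μ).re =
        a * (Real.log (‖μ‖) - Real.log (‖z₀‖)) -
        2 * ε * (((starRingEnd ℂ) z₀) * (μ - z₀)).re := by
      intro μ hμ
      have e1 : ((a:ℂ) * Complex.log (μ / z₀)).re = a * Real.log (‖μ / z₀‖) := by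
        rw [Complex.re_ofReal_mul, Complex.log_re]
      have e2 : ‖μ / z₀‖ = ‖μ‖ / ‖z₀‖ := norm_div _ _
      have e3 : (2 * (ε:ℂ) * ((starRingEnd ℂ) z₀) * (μ - z₀)).re =
          2 * ε * (((starRingEnd ℂ) z₀) * (μ - z₀)).re := by
        have h4 : 2 * (ε:ℂ) * ((starRingEnd ℂ) z₀) * (μ - z₀) =
            ((2 * ε : ℝ) : ℂ) * (((starRingEnd ℂ) z₀) * (μ - z₀)) := by
          push_cast; ring
        rw [h4, Complex.re_ofReal_mul]
      show ((a:ℂ) * Complex.log (μ / z₀) -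
        2 * (ε : ℂ) * ((starRingEnd ℂ) z₀) * (μ - z₀)).re = _
      rw [Complex.sub_re, e1, e2, Real.log_div hμ hz₀abs.ne', e3]
    have habssq : ∀ μ : ℂ, ‖μ - z₀‖ = δ →
        (‖μ‖) ^ 2 = (‖z₀‖) ^ 2 +
          2 * (((starRingEnd ℂ) z₀) * (μ - z₀)).re + δ ^ 2 := by
      intro μ hμd
      have h0 : z₀ + (μ - z₀) = μ := by ring
      have hre : (z₀ * (starRingEnd ℂ) (μ - z₀)).re =
          (((starRingEnd ℂ) z₀) * (μ - z₀)).re := by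
        calc (z₀ * (starRingEnd ℂ) (μ - z₀)).re
            = ((starRingEnd ℂ) (z₀ * (starRingEnd ℂ) (μ - z₀))).re :=
              (Complex.conj_re _).symm
        _ = (((starRingEnd ℂ) z₀) * (μ - z₀)).re := by
              rw [map_mul, Complex.conj_conj]
      calc (‖μ‖) ^ 2 = Complex.normSq μ := Complex.sq_norm μ
      _ = Complex.normSq (z₀ + (μ - z₀)) := by rw [h0]
      _ = Complex.normSq z₀ + Complex.normSq (μ - z₀) +
            2 * (z₀ * (starRingEnd ℂ) (μ - z₀)).re := Complex.normSq_add _ _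
      _ = (‖z₀‖) ^ 2 + 2 * (((starRingEnd ℂ) z₀) * (μ - z₀)).re + δ ^ 2 := by
            rw [← Complex.sq_norm, ← Complex.sq_norm (μ - z₀), hμd, hre]; ring
    set c₀ : ℝ := a * Real.log (‖z₀‖) + b + ε * r ^ 2 -
      ε * (‖z₀‖) ^ 2 - ε * δ ^ 2 with hc₀def
    have hψeq : ∀ μ : ℂ, ‖μ - z₀‖ = δ → ‖μ‖ ≠ 0 →
        ψ μ = (G μ).re + c₀ := by
      intro μ h1 h2
      have e1 := hGre μ h2
      have e2 := habssq μ h1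
      have e0 : ψ μ = a * Real.log (‖μ‖) + b +
          ε * (r ^ 2 - (‖μ‖) ^ 2) := rfl
      rw [e0, e1, e2, hc₀def]; ring
    set c : ℝ := Real.log S + c₀ with hcdef
    set η' : ℝ := ε * δ ^ 2 / 4 with hη'def
    have hη'pos : 0 < η' := by positivity
    obtain ⟨P, hP⟩ := poly_approx hΩo hGd hδ hbΩ hη'pos
    set Q : Polynomial ℂ := P + Polynomial.C (((c + η' : ℝ) : ℂ)) with hQdef
    have hQre : ∀ μ : ℂ, (Q.eval μ).re = (P.eval μ).re + (c + η') := by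
      intro μ
      rw [hQdef]
      simp [Polynomial.eval_add, Polynomial.eval_C, Complex.add_re, Complex.ofReal_re]
    have hsphere_bd : ∀ μ ∈ sphere z₀ δ, erealLog (v μ) ≤ (((Q.eval μ).re : ℝ) : EReal) := by
      intro μ hμ
      have hd : ‖μ - z₀‖ = δ := by
        rw [← Complex.dist_eq]; exact Metric.mem_sphere.1 hμ
      have hμA : μ ∈ A := hball_sub (sphere_subset_closedBall hμ)
      have hμabs : ‖μ‖ ≠ 0 := (habs_pos μ hμA).ne'
      have hFμ : F μ ≤ S := hmax μ hμA
      have hvμ : v μ ≤ S * Real.exp (ψ μ) := by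
        have hveq : v μ = F μ * Real.exp (ψ μ) := by
          show v μ = v μ * Real.exp (-ψ μ) * Real.exp (ψ μ)
          rw [mul_assoc, ← Real.exp_add, neg_add_cancel, Real.exp_zero, mul_one]
        rw [hveq]
        exact mul_le_mul_of_nonneg_right hFμ (Real.exp_pos _).le
      rw [erealLog_le_coe_iff]
      have h1 : S * Real.exp (ψ μ) = Real.exp (Real.log S + ψ μ) := by
        have h1' : Real.exp (Real.log S + ψ μ) = Real.exp (Real.log S) * Real.exp (ψ μ) :=
          Real.exp_add _ _
        rw [h1', Real.exp_log hSpos]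
      have h2 : Real.log S + ψ μ = (G μ).re + c := by
        rw [hψeq μ hd hμabs, hcdef]; ring
      have h3 : (G μ).re ≤ (P.eval μ).re + η' := by
        have h5 := hP μ (sphere_subset_closedBall hμ)
        have h4 := Complex.re_le_norm (G μ - P.eval μ)
        rw [Complex.sub_re] at h4
        linarith
      calc v μ ≤ S * Real.exp (ψ μ) := hvμ
      _ = Real.exp ((G μ).re + c) := by rw [h1, h2]
      _ ≤ Real.exp ((Q.eval μ).re) := by
          rw [Real.exp_le_exp, hQre]
          linarith
    have happ := hsub.2 z₀ δ hδ (hball_sub.trans hAball) Q hsphere_bd z₀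
      (mem_closedBall_self hδ.le)
    rw [erealLog_le_coe_iff] at happ
    have hG0 : (G z₀).re = 0 := by
      have hg : G z₀ = 0 := by
        show (a:ℂ) * Complex.log (z₀ / z₀) -
          2 * (ε : ℂ) * ((starRingEnd ℂ) z₀) * (z₀ - z₀) = 0
        rw [div_self hz₀ne, Complex.log_one]; ring
      rw [hg, Complex.zero_re]
    have hP0 : (P.eval z₀).re ≤ η' := by
      have h5 := hP z₀ (mem_closedBall_self hδ.le)
      have h4 := Complex.re_le_norm (Polynomial.eval z₀ P - G z₀)
      rw [Complex.sub_re, hG0, norm_sub_rev] at h4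
      linarith
    have hψz₀ : ψ z₀ = c₀ + ε * δ ^ 2 := by
      have e0 : ψ z₀ = a * Real.log (‖z₀‖) + b +
          ε * (r ^ 2 - (‖z₀‖) ^ 2) := rfl
      rw [e0, hc₀def]; ring
    have hfinal : v z₀ ≤ Real.exp (Real.log S + ψ z₀ - ε * δ ^ 2 / 2) := by
      calc v z₀ ≤ Real.exp ((Q.eval z₀).re) := happ
      _ = Real.exp ((P.eval z₀).re + (c + η')) := by rw [hQre]
      _ ≤ Real.exp (η' + (c + η')) := by rw [Real.exp_le_exp]; linarith
      _ = Real.exp (Real.log S + ψ z₀ - ε * δ ^ 2 / 2) := by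
          congr 1
          rw [hψz₀, hcdef, hη'def]; ring
    have hcontr : S < S := by
      calc S = v z₀ * Real.exp (-ψ z₀) := rfl
      _ ≤ Real.exp (Real.log S + ψ z₀ - ε * δ ^ 2 / 2) * Real.exp (-ψ z₀) :=
          mul_le_mul_of_nonneg_right hfinal (Real.exp_pos _).le
      _ = Real.exp (Real.log S - ε * δ ^ 2 / 2) := by
          rw [← Real.exp_add]; congr 1; ring
      _ = S * Real.exp (-(ε * δ ^ 2 / 2)) := by
          rw [Real.exp_sub, Real.exp_log hSpos, div_eq_mul_inv, ← Real.exp_neg]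
      _ < S * 1 := by
          apply mul_lt_mul_of_pos_left _ hSpos
          rw [Real.exp_lt_one_iff]
          have : 0 < ε * δ ^ 2 / 2 := by positivity
          linarith
      _ = S := mul_one S
    exact lt_irrefl S hcontr
  -- conclude from the claim
  intro lam h1 h2
  have hlamA : lam ∈ A := (hmemA lam).2 ⟨h1, h2⟩
  have := (hmax lam hlamA).trans hkey
  have hv : v lam = F lam * Real.exp (ψ lam) := by
    rw [hFdef]
    simp only []
    rw [mul_assoc, ← Real.exp_add, neg_add_cancel, Real.exp_zero, mul_one]
  rw [hv]
  calc F lam * Real.exp (ψ lam) ≤ 1 * Real.exp (ψ lam) :=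
        mul_le_mul_of_nonneg_right this (Real.exp_pos _).le
  _ = Real.exp (ψ lam) := one_mul _

/-- Schwarz-type lemma: if `v : 𝔻 → [0,1)` is log-subharmonic with `v 0 = 0` and `v²` of
class `C²` near `0`, then `v(ζ) ≤ |ζ|` on `𝔻`. -/
theorem log_subharmonic_schwarz (v : ℂ → ℝ)
    (hv01 : ∀ ζ ∈ ball (0 : ℂ) 1, v ζ ∈ Ico (0 : ℝ) 1)
    (hsub : SubharmonicOnE (fun ζ => erealLog (v ζ)) (ball (0 : ℂ) 1))
    (hv0 : v 0 = 0)
    (hC2 : ∃ V : Set ℂ, IsOpen V ∧ (0 : ℂ) ∈ V ∧ V ⊆ ball (0 : ℂ) 1 ∧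
      ContDiffOn ℝ 2 (fun ζ => (v ζ) ^ 2) V) :
    ∀ ζ ∈ ball (0 : ℂ) 1, v ζ ≤ ‖ζ‖ := by
  obtain ⟨V, hVo, hV0, hVsub, hC2⟩ := hC2
  have hvnnV : ∀ ζ ∈ V, 0 ≤ v ζ := fun ζ hζ => (hv01 ζ (hVsub hζ)).1
  obtain ⟨C, t, hC, ht, hCt⟩ := sq_bound hVo hV0 hC2 hv0 hvnnV
  intro ζ hζ
  by_cases hζ0 : ζ = 0
  · rw [hζ0, hv0]
    simp
  have haζ : 0 < ‖ζ‖ := norm_pos_iff.mpr hζ0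
  have hζ1 : ‖ζ‖ < 1 := by
    rw [mem_ball, Complex.dist_eq, sub_zero] at hζ
    exact hζ
  by_contra hcon
  push_neg at hcon
  have hvpos : 0 < v ζ := lt_trans haζ hcon
  obtain ⟨η, hηdef⟩ : ∃ x : ℝ, x = Real.log (v ζ) - Real.log (‖ζ‖) := ⟨_, rfl⟩
  have hηpos : 0 < η := by
    rw [hηdef]
    exact sub_pos.2 (Real.log_lt_log haζ hcon)
  suffices hmain : v ζ ≤ Real.exp (Real.log (‖ζ‖) + η / 2) by
    have hlt : Real.exp (Real.log (‖ζ‖) + η / 2) < Real.exp (Real.log (v ζ)) := by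
      apply Real.exp_lt_exp.2
      rw [hηdef]
      have := Real.log_lt_log haζ hcon
      linarith
    rw [Real.exp_log hvpos] at hlt
    linarith
  -- choose the outer radius r
  obtain ⟨r, hrdef⟩ : ∃ x : ℝ, x = (max (‖ζ‖) (Real.exp (-(η / 8))) + 1) / 2 :=
    ⟨_, rfl⟩
  have hm1 : max (‖ζ‖) (Real.exp (-(η / 8))) < 1 :=
    max_lt hζ1 (Real.exp_lt_one_iff.2 (by linarith))
  have hm0 : 0 < max (‖ζ‖) (Real.exp (-(η / 8))) :=
    lt_of_lt_of_le (Real.exp_pos _) (le_max_right _ _)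
  have hr1 : r < 1 := by rw [hrdef]; linarith
  have hrm : max (‖ζ‖) (Real.exp (-(η / 8))) < r := by rw [hrdef]; linarith
  have hζr : ‖ζ‖ < r := lt_of_le_of_lt (le_max_left _ _) hrm
  have hrpos : 0 < r := lt_trans hm0 hrm
  have hlogr : -Real.log r < η / 8 := by
    have hexp : Real.exp (-(η / 8)) < r := lt_of_le_of_lt (le_max_right _ _) hrm
    have := (Real.lt_log_iff_exp_lt hrpos).2 hexp
    linarith
  obtain ⟨L, hLdef⟩ : ∃ x : ℝ, x = Real.log (‖ζ‖) - Real.log r := ⟨_, rfl⟩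
  obtain ⟨K, hKdef⟩ : ∃ x : ℝ, x = Real.log C + Real.log r := ⟨_, rfl⟩
  obtain ⟨ρ, hρdef⟩ : ∃ x : ℝ, x = min (min t (‖ζ‖ / 2))
    (r * Real.exp (-((8 * (|L| * |K|) + 1) / η))) := ⟨_, rfl⟩
  have hρpos : 0 < ρ := by
    rw [hρdef]
    exact lt_min (lt_min ht (by positivity)) (by positivity)
  have hρt : ρ ≤ t := by rw [hρdef]; exact le_trans (min_le_left _ _) (min_le_left _ _)
  have hρζhalf : ρ ≤ ‖ζ‖ / 2 := by
    rw [hρdef]; exact le_trans (min_le_left _ _) (min_le_right _ _)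
  have hρ3 : ρ ≤ r * Real.exp (-((8 * (|L| * |K|) + 1) / η)) := by
    rw [hρdef]; exact min_le_right _ _
  have hρζ : ρ < ‖ζ‖ := lt_of_le_of_lt hρζhalf (by linarith)
  have hρr : ρ < r := lt_trans hρζ hζr
  obtain ⟨D, hDdef⟩ : ∃ x : ℝ, x = Real.log ρ - Real.log r := ⟨_, rfl⟩
  have hDneg : D ≤ -((8 * (|L| * |K|) + 1) / η) := by
    have h1 : Real.log ρ ≤ Real.log (r * Real.exp (-((8 * (|L| * |K|) + 1) / η))) := by
      rw [Real.log_le_log_iff hρpos (by positivity)]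
      exact hρ3
    rw [Real.log_mul hrpos.ne' (Real.exp_pos _).ne', Real.log_exp] at h1
    rw [hDdef]
    linarith
  have hquotpos : 0 < (8 * (|L| * |K|) + 1) / η := by positivity
  have hD0 : D < 0 := lt_of_le_of_lt hDneg (by linarith)
  obtain ⟨a, hadef⟩ : ∃ x : ℝ, x = (Real.log C + Real.log ρ) / D := ⟨_, rfl⟩
  obtain ⟨b, hbdef⟩ : ∃ x : ℝ, x = -a * Real.log r := ⟨_, rfl⟩
  have hbdρ : ∀ lam : ℂ, ‖lam‖ = ρ → v lam ≤ Real.exp (a * Real.log ρ + b) := by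
    intro lam hlam
    have h1 : v lam ≤ C * ρ := by
      have := hCt lam (le_of_eq hlam |>.trans hρt)
      rw [hlam] at this
      exact this
    have h2 : a * Real.log ρ + b = Real.log C + Real.log ρ := by
      have e : a * Real.log ρ + b = a * D := by rw [hbdef, hDdef]; ring
      rw [e, hadef, div_mul_cancel₀ _ hD0.ne]
    rw [h2, Real.exp_add, Real.exp_log hC, Real.exp_log hρpos]
    exact h1
  have hbdr : ∀ lam : ℂ, ‖lam‖ = r → v lam ≤ Real.exp (a * Real.log r + b) := by
    intro lam hlam
    have h2 : a * Real.log r + b = 0 := by rw [hbdef]; ring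
    rw [h2, Real.exp_zero]
    refine (hv01 lam ?_).2.le
    rw [mem_ball, Complex.dist_eq, sub_zero, hlam]
    exact hr1
  have hann := annulus_bound v hv01 hsub hρpos hρr hr1 (show 0 < η / 8 by linarith)
    hbdρ hbdr ζ hρζ.le hζr.le
  refine hann.trans (Real.exp_le_exp.2 ?_)
  have ha1 : a - 1 = K / D := by
    rw [eq_div_iff hD0.ne]
    have e1 : a * D = Real.log C + Real.log ρ := by
      rw [hadef]
      exact div_mul_cancel₀ _ hD0.ne
    calc (a - 1) * D = a * D - D := by ring
    _ = (Real.log C + Real.log ρ) - D := by rw [e1]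
    _ = K := by rw [hDdef, hKdef]; ring
  have hDabs : (8 * (|L| * |K|) + 1) / η ≤ |D| := by
    rw [abs_of_neg hD0]
    linarith
  have habs : |a - 1| * |L| ≤ η / 8 := by
    rw [ha1, abs_div]
    calc |K| / |D| * |L| = |L| * |K| / |D| := by ring
    _ ≤ |L| * |K| / ((8 * (|L| * |K|) + 1) / η) := by
        gcongr
    _ ≤ η / 8 := by
        rw [div_le_div_iff₀ hquotpos (by norm_num)]
        rw [mul_comm η, div_mul_cancel₀ _ hηpos.ne']
        nlinarith [abs_nonneg L, abs_nonneg K, hηpos, mul_nonneg (abs_nonneg L) (abs_nonneg K)]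
  have haL : a * L ≤ L + η / 8 := by
    have h1 : a * L = L + (a - 1) * L := by ring
    have h2 : (a - 1) * L ≤ |a - 1| * |L| := by
      rw [← abs_mul]
      exact le_abs_self _
    linarith
  have hεbd : η / 8 * (r ^ 2 - (‖ζ‖) ^ 2) ≤ η / 8 := by
    have hr2 : r ^ 2 ≤ 1 := by
      have := mul_le_one₀ hr1.le hrpos.le hr1.le
      calc r ^ 2 = r * r := sq r
      _ ≤ 1 := this
    have h3 : r ^ 2 - (‖ζ‖) ^ 2 ≤ 1 := by
      have := sq_nonneg (‖ζ‖)
      linarith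
    calc η / 8 * (r ^ 2 - (‖ζ‖) ^ 2) ≤ η / 8 * 1 :=
          mul_le_mul_of_nonneg_left h3 (by linarith)
    _ = η / 8 := mul_one _
  have hsplit : a * Real.log (‖ζ‖) + b = a * L := by
    rw [hbdef, hLdef]; ring
  calc a * Real.log (‖ζ‖) + b + η / 8 * (r ^ 2 - (‖ζ‖) ^ 2)
      = a * L + η / 8 * (r ^ 2 - (‖ζ‖) ^ 2) := by rw [hsplit]
  _ ≤ (L + η / 8) + η / 8 := by linarith [haL, hεbd]
  _ = Real.log (‖ζ‖) - Real.log r + η / 4 := by rw [hLdef]; ring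
  _ ≤ Real.log (‖ζ‖) + η / 2 := by linarith [hlogr]
end
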